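/- Let 1 ≤ k ≤ n-1 and let F be a family of nonempty subsets of [n], each of size at most k, such that for every A, B ∈ F with A ∩ B = ∅ one has |A| + |B| ≤ k. Then |F| ≤ C(n-1,k-1) + C(n-1,k-2) + ... + C(n-1,0). -/

import Mathlib

open Finset

namespace Stmt11

def Valid (k : ℕ) (F : Finset (Finset ℕ)) : Prop :=
  ∀ p ∈ F, ∀ q ∈ F, p ≠ q → Disjoint p q → p.card + q.card ≤ k

def Shifted (F : Finset (Finset ℕ)) : Prop :=
  ∀ A ∈ F, ∀ i j : ℕ, i < j → j ∈ A → i ∉ A → insert i (A.erase j) ∈ F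

lemma card_insert_erase {i j : ℕ} {A : Finset ℕ} (hi : i ∉ A) (hj : j ∈ A) :
    (insert i (A.erase j)).card = A.card := by
  rw [card_insert_of_notMem (fun h => hi (mem_of_mem_erase h)), card_erase_of_mem hj]
  have : 1 ≤ A.card := card_pos.2 ⟨j, hj⟩
  omega

lemma compress_eq {i j : ℕ} (hij : i ≠ j) {A : Finset ℕ} (hi : i ∉ A) (hj : j ∈ A) :
    UV.compress {i} {j} A = insert i (A.erase j) := by
  rw [UV.compress_of_disjoint_of_le (by simpa using hi) (by simpa using hj)]
  have : A ⊔ {i} = insert i A := by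
    rw [sup_eq_union, union_comm]; rfl
  rw [this]
  ext x
  simp only [mem_sdiff, mem_insert, mem_singleton, mem_erase]
  constructor
  · rintro ⟨h1 | h1, h2⟩
    exacts [Or.inl h1, Or.inr ⟨h2, h1⟩]
  · rintro (h1 | ⟨h1, h2⟩)
    exacts [⟨Or.inl h1, h1 ▸ hij⟩, ⟨Or.inr h2, h1⟩]

lemma compress_eq_self {i j : ℕ} {A : Finset ℕ} (h : i ∈ A ∨ j ∉ A) :
    UV.compress {i} {j} A = A := by
  unfold UV.compress
  rw [if_neg]
  simp only [disjoint_singleton_left, singleton_subset_iff]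
  tauto

lemma mem_insert_erase_iff {i j x : ℕ} {A : Finset ℕ} :
    x ∈ insert i (A.erase j) ↔ x = i ∨ (x ∈ A ∧ x ≠ j) := by
  simp [mem_insert, mem_erase, and_comm]

end Stmt11

namespace Stmt11
open UV

lemma moved_mem_i {i j : ℕ} (hij : i < j) {F : Finset (Finset ℕ)} {q : Finset ℕ}
    (hqF : q ∉ F) (hb : ∃ b ∈ F, UV.compress {i} {j} b = q) :
    i ∈ q ∧ ∃ b ∈ F, i ∉ b ∧ j ∈ b ∧ q = insert i (b.erase j) := by
  obtain ⟨b, hbF, rfl⟩ := hb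
  by_cases hcond : i ∈ b ∨ j ∉ b
  · rw [compress_eq_self hcond] at hqF ⊢; exact absurd hbF hqF
  · push_neg at hcond
    rw [compress_eq hij.ne hcond.1 hcond.2]
    exact ⟨mem_insert_self _ _, b, hbF, hcond.1, hcond.2, rfl⟩

lemma valid_aux {k i j : ℕ} (hij : i < j) {F : Finset (Finset ℕ)} (hF : Valid k F)
    {p q : Finset ℕ} (hpF : p ∈ F) (hpc : UV.compress {i} {j} p ∈ F)
    (hqF : q ∉ F) (hb : ∃ b ∈ F, UV.compress {i} {j} b = q)
    (hpq : p ≠ q) (hdisj : Disjoint p q) : p.card + q.card ≤ k := by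
  obtain ⟨hiq, b, hbF, hib, hjb, rfl⟩ := moved_mem_i hij hqF hb
  have hip : i ∉ p := fun h => (disjoint_left.1 hdisj h) hiq
  have hcardq : (insert i (b.erase j)).card = b.card := card_insert_erase hib hjb
  by_cases hjp : j ∈ p
  · -- use pair (b, p₂ := insert i (p.erase j))
    have hp₂ : insert i (p.erase j) ∈ F := by
      rw [compress_eq hij.ne hip hjp] at hpc; exact hpc
    have hne : b ≠ insert i (p.erase j) := by
      intro h
      have : j ∈ insert i (p.erase j) := h ▸ hjb
      rw [mem_insert_erase_iff] at this
      rcases this with h' | h' 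
      · exact hij.ne h'.symm
      · exact h'.2 rfl
    have hd : Disjoint b (insert i (p.erase j)) := by
      rw [disjoint_left]
      intro x hxb hxp
      rw [mem_insert_erase_iff] at hxp
      rcases hxp with rfl | ⟨hxp, hxj⟩
      · exact hib hxb
      · have hxq : x ∈ insert i (b.erase j) := mem_insert_erase_iff.2 (Or.inr ⟨hxb, hxj⟩)
        exact (disjoint_left.1 hdisj hxp) hxq
    have := hF b hbF _ hp₂ hne hd
    rw [card_insert_erase hip hjp] at this
    omega
  · -- pair (p, b)
    have hne : p ≠ b := fun h => hjp (h ▸ hjb)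
    have hd : Disjoint p b := by
      rw [disjoint_left]
      intro x hxp hxb
      have hxj : x ≠ j := fun h => hjp (h ▸ hxp)
      have hxq : x ∈ insert i (b.erase j) := mem_insert_erase_iff.2 (Or.inr ⟨hxb, hxj⟩)
      exact (disjoint_left.1 hdisj hxp) hxq
    have := hF p hpF b hbF hne hd
    omega

lemma valid_compression {k i j : ℕ} (hij : i < j) {F : Finset (Finset ℕ)} (hF : Valid k F) :
    Valid k (UV.compression {i} {j} F) := by
  intro p hp q hq hpq hdisj
  rw [UV.mem_compression] at hp hq
  rcases hp with ⟨hpF, hpc⟩ | ⟨hpF, hp⟩ <;> rcases hq with ⟨hqF, hqc⟩ | ⟨hqF, hq⟩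
  · exact hF p hpF q hqF hpq hdisj
  · exact valid_aux hij hF hpF hpc hqF hq hpq hdisj
  · have := valid_aux hij hF hqF hqc hpF hp hpq.symm hdisj.symm
    omega
  · exact absurd ((moved_mem_i hij hqF hq).1) 
      (fun h => (disjoint_left.1 hdisj (moved_mem_i hij hpF hp).1) h)

lemma props_compression {n i j : ℕ} (hij : i < j) {F : Finset (Finset ℕ)}
    (hsub : ∀ A ∈ F, A ⊆ range n) {lo hi : ℕ}
    (hwin : ∀ A ∈ F, lo ≤ A.card ∧ A.card ≤ hi) :
    ∀ A ∈ UV.compression {i} {j} F, (A ⊆ range n) ∧ lo ≤ A.card ∧ A.card ≤ hi := by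
  intro A hA
  rw [UV.mem_compression] at hA
  rcases hA with ⟨hAF, _⟩ | ⟨hAF, hb⟩
  · exact ⟨hsub A hAF, hwin A hAF⟩
  · obtain ⟨hiA, b, hbF, hib, hjb, rfl⟩ := moved_mem_i hij hAF hb
    have hjn : j < n := by
      have := hsub b hbF hjb; simpa [mem_range] using this
    constructor
    · intro x hx
      rw [mem_insert_erase_iff] at hx
      rcases hx with rfl | ⟨hx, _⟩
      · exact mem_range.2 (hij.trans hjn)
      · exact hsub b hbF hx
    · rw [card_insert_erase hib hjb]
      exact hwin b hbF

def fmeas (F : Finset (Finset ℕ)) : ℕ := ∑ A ∈ F, ∑ x ∈ A, x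

lemma fmeas_compression_lt {i j : ℕ} (hij : i < j) {F : Finset (Finset ℕ)}
    (h : ∃ A ∈ F, j ∈ A ∧ i ∉ A ∧ insert i (A.erase j) ∉ F) :
    fmeas (UV.compression {i} {j} F) < fmeas F := by
  classical
  obtain ⟨A₀, hA₀, hjA₀, hiA₀, hmA₀⟩ := h
  have q : ∀ Q ∈ F.filter (fun a => UV.compress {i} {j} a ∉ F), UV.compress {i} {j} Q ≠ Q := by
    intro Q hQ h
    rw [mem_filter] at hQ
    rw [h] at hQ
    exact hQ.2 hQ.1
  have uA : F.filter (fun a => UV.compress {i} {j} a ∈ F) ∪ 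
      F.filter (fun a => UV.compress {i} {j} a ∉ F) = F := filter_union_filter_not_eq _ _
  have ne₂ : (F.filter (fun a => UV.compress {i} {j} a ∉ F)).Nonempty := by
    refine ⟨A₀, mem_filter.2 ⟨hA₀, ?_⟩⟩
    rwa [compress_eq hij.ne hiA₀ hjA₀]
  rw [UV.compression, fmeas, fmeas, sum_union UV.compress_disjoint]
  conv_rhs => rw [← uA]
  rw [sum_union (disjoint_filter_filter_not _ _ _), add_lt_add_iff_left, filter_image,
    sum_image UV.compress_injOn]
  refine sum_lt_sum_of_nonempty ne₂ fun A hA => ?_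
  have hA' := mem_filter.1 hA
  have hcond : i ∉ A ∧ j ∈ A := by
    by_contra hc
    have : i ∈ A ∨ j ∉ A := by tauto
    exact q A hA (compress_eq_self this)
  rw [compress_eq hij.ne hcond.1 hcond.2]
  have hsum : ∑ x ∈ insert i (A.erase j), x = i + ∑ x ∈ A.erase j, x := by
    apply sum_insert
    intro h; exact hcond.1 (mem_of_mem_erase h)
  rw [hsum]
  have : ∑ x ∈ A, x = j + ∑ x ∈ A.erase j, x := by
    rw [add_comm, sum_erase_add A _ hcond.2]
  omega

lemma exists_shifted {n k lo hi : ℕ} : ∀ (N : ℕ) (F : Finset (Finset ℕ)), fmeas F ≤ N →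
    (∀ A ∈ F, A ⊆ range n) → (∀ A ∈ F, lo ≤ A.card ∧ A.card ≤ hi) → Valid k F →
    ∃ G : Finset (Finset ℕ), G.card = F.card ∧ (∀ A ∈ G, A ⊆ range n) ∧
      (∀ A ∈ G, lo ≤ A.card ∧ A.card ≤ hi) ∧ Valid k G ∧ Shifted G := by
  intro N
  induction N with
  | zero =>
    intro F hm hsub hwin hval
    refine ⟨F, rfl, hsub, hwin, hval, ?_⟩
    intro A hA i j hij hjA hiA
    exfalso
    have : 0 < fmeas F := by
      have : 0 < ∑ x ∈ A, x := by
        refine sum_pos' (fun x _ => Nat.zero_le x) ⟨j, hjA, by omega⟩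
      unfold fmeas
      exact lt_of_lt_of_le this (single_le_sum (f := fun B => ∑ x ∈ B, x) (fun B _ => Nat.zero_le _) hA)
    omega
  | succ N ih =>
    intro F hm hsub hwin hval
    by_cases hsh : Shifted F
    · exact ⟨F, rfl, hsub, hwin, hval, hsh⟩
    · unfold Shifted at hsh
      push_neg at hsh
      obtain ⟨A, hAF, i, j, hij, hjA, hiA, hmove⟩ := hsh
      have hlt := fmeas_compression_lt hij ⟨A, hAF, hjA, hiA, hmove⟩
      have hprops := props_compression hij hsub hwin (lo := lo) (hi := hi)
      obtain ⟨G, hG1, hG2, hG3, hG4, hG5⟩ := ih (UV.compression {i} {j} F) (by omega)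
        (fun A hA => (hprops A hA).1) (fun A hA => (hprops A hA).2)
        (valid_compression hij hval)
      exact ⟨G, hG1.trans (UV.card_compression _ _ _), hG2, hG3, hG4, hG5⟩

end Stmt11

namespace Stmt11

lemma card_filter_card_mem (V : Finset ℕ) (a b : ℕ) :
    ((V.powerset.filter (fun T => T.card ∈ Ico a b))).card = ∑ j ∈ Ico a b, (V.card).choose j := by
  classical
  have heq : V.powerset.filter (fun T => T.card ∈ Ico a b) = 
      (Ico a b).biUnion (fun j => powersetCard j V) := by
    ext T
    simp only [mem_filter, mem_powerset, mem_biUnion, mem_powersetCard, mem_Ico]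
    constructor
    · rintro ⟨h1, h2⟩; exact ⟨T.card, h2, h1, rfl⟩
    · rintro ⟨j, hj, h1, rfl⟩; exact ⟨h1, hj⟩
  rw [heq, card_biUnion]
  · exact Finset.sum_congr rfl (fun j _ => card_powersetCard j V)
  · intro x _ y _ hxy
    rw [Function.onFun, disjoint_left]
    intro T hTx hTy
    rw [mem_powersetCard] at hTx hTy
    exact hxy (hTx.2 ▸ hTy.2.symm ▸ rfl)

lemma sum_range_choose_step (m t : ℕ) : ∑ j ∈ range (t+1), (m+1).choose j 
    = ∑ j ∈ range (t+1), m.choose j + ∑ j ∈ range t, m.choose j := by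
  induction t with
  | zero => simp
  | succ t ih =>
    rw [sum_range_succ, ih, sum_range_succ (f := fun j => m.choose j) (n := t+1),
      sum_range_succ (f := fun j => m.choose j) (n := t), Nat.choose_succ_succ]
    simp only [Nat.succ_eq_add_one]
    omega

lemma sum_Ico_choose_step (m a b : ℕ) (ha : 1 ≤ a) : ∑ j ∈ Ico a b, (m+1).choose j 
    = ∑ j ∈ Ico a b, m.choose j + ∑ j ∈ Ico (a-1) (b-1), m.choose j := by
  induction b with
  | zero => rw [Ico_eq_empty (by omega), Ico_eq_empty (by omega)]; simp
  | succ b ih =>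
    by_cases hab : a ≤ b
    · have hb1 : 1 ≤ b := le_trans ha hab
      rw [sum_Ico_succ_top hab, sum_Ico_succ_top (f := fun j => m.choose j) hab, ih]
      have h2 : ∑ j ∈ Ico (a-1) (b+1-1), m.choose j 
          = ∑ j ∈ Ico (a-1) (b-1), m.choose j + m.choose (b-1) := by
        have he : b + 1 - 1 = (b-1) + 1 := by omega
        rw [he, sum_Ico_succ_top (by omega)]
      have h3 : (m+1).choose b = m.choose b + m.choose (b-1) := by
        obtain ⟨c, rfl⟩ : ∃ c, b = c + 1 := ⟨b-1, by omega⟩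
        rw [Nat.choose_succ_succ]
        have hce : c + 1 - 1 = c := by omega
        rw [hce]
        simp only [Nat.succ_eq_add_one]
        omega
      rw [h2, h3]
      omega
    · rw [Ico_eq_empty (by omega), Ico_eq_empty (by omega)]
      simp

lemma self_le_choose (m r : ℕ) (h1 : 1 ≤ r) (h2 : r + 1 ≤ m) : m ≤ m.choose r := by
  induction m with
  | zero => omega
  | succ m ih =>
    rcases Nat.lt_or_ge (r+1) (m+1) with h | h
    · have hr : r + 1 ≤ m := by omega
      obtain ⟨c, rfl⟩ : ∃ c, r = c + 1 := ⟨r - 1, by omega⟩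
      rw [Nat.choose_succ_succ]
      have h2 : 1 ≤ m.choose c := Nat.choose_pos (by omega)
      have := ih hr
      simp only [Nat.succ_eq_add_one] at *
      omega
    · have : r = m := by omega
      subst this
      rw [Nat.choose_succ_self_right]

end Stmt11

namespace Stmt11

-- base case: n = k + 1
lemma base_case (k s : ℕ) (F : Finset (Finset ℕ)) (hs : 1 ≤ s)
    (hsub : ∀ A ∈ F, A ⊆ range (k+1)) (hwin : ∀ A ∈ F, s ≤ A.card ∧ A.card ≤ k+1-s)
    (hval : Valid k F) :
    F.card ≤ ∑ j ∈ Ico (s-1) (k+1-s), k.choose j := by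
  classical
  set V : Finset ℕ := (range (k+1)).erase 0 with hV
  have hVcard : V.card = k := by
    rw [hV, card_erase_of_mem (mem_range.2 (by omega)), card_range]
    omega
  set TS : Finset (Finset ℕ) := V.powerset.filter (fun T => T.card ∈ Ico (s-1) (k+1-s)) with hTS
  have hTScard : TS.card = ∑ j ∈ Ico (s-1) (k+1-s), k.choose j := by
    rw [hTS, card_filter_card_mem, hVcard]
  rw [← hTScard]
  -- injection ψ A := (if 0 ∈ A then A else range (k+1) \ A).erase 0
  apply Finset.card_le_card_of_injOn
    (fun A => (if 0 ∈ A then A else range (k+1) \ A).erase 0)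
  · -- maps into TS
    intro A hA
    have hAwin := hwin A hA
    have hAsub := hsub A hA
    have h0 : 0 ∈ (if 0 ∈ A then A else range (k+1) \ A) := by
      by_cases h : 0 ∈ A
      · simpa [h]
      · rw [if_neg h]
        exact mem_sdiff.2 ⟨mem_range.2 (by omega), h⟩
    have hcard : (if 0 ∈ A then A else range (k+1) \ A).card ∈ Icc s (k+1-s) := by
      by_cases h : 0 ∈ A
      · simp only [h, if_true, mem_Icc]; omega
      · simp only [h, if_false, mem_Icc, card_sdiff_of_subset hAsub, card_range]
        omega
    have hsubV : (if 0 ∈ A then A else range (k+1) \ A) ⊆ range (k+1) := by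
      by_cases h : 0 ∈ A
      · simpa [h] using hAsub
      · simp [h, sdiff_subset]
    simp only [hTS, mem_coe, mem_filter, mem_powerset]
    constructor
    · intro x hx
      rw [mem_erase] at hx
      rw [hV, mem_erase]
      exact ⟨hx.1, hsubV hx.2⟩
    · rw [card_erase_of_mem h0, mem_Ico]
      rw [mem_Icc] at hcard
      omega
  · -- injective
    intro A hA B hB hAB
    simp only at hAB
    have h0A : 0 ∈ (if 0 ∈ A then A else range (k+1) \ A) := by
      by_cases h : 0 ∈ A
      · simpa [h]
      · rw [if_neg h]; exact mem_sdiff.2 ⟨mem_range.2 (by omega), h⟩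
    have h0B : 0 ∈ (if 0 ∈ B then B else range (k+1) \ B) := by
      by_cases h : 0 ∈ B
      · simpa [h]
      · rw [if_neg h]; exact mem_sdiff.2 ⟨mem_range.2 (by omega), h⟩
    have heq : (if 0 ∈ A then A else range (k+1) \ A) = (if 0 ∈ B then B else range (k+1) \ B) := by
      have := congrArg (insert 0) hAB
      rwa [insert_erase h0A, insert_erase h0B] at this
    -- four cases
    have hcontra : ∀ P Q : Finset ℕ, P ∈ F → Q ∈ F → 0 ∈ P → 0 ∉ Q →
        P = range (k+1) \ Q → False := by
      intro P Q hP hQ h0P h0Q hPQ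
      have hdisj : Disjoint P Q := hPQ ▸ sdiff_disjoint
      have hne : P ≠ Q := fun h => h0Q (h ▸ h0P)
      have hsum := hval P hP Q hQ hne hdisj
      have hcP : P.card = k + 1 - Q.card := by
        rw [hPQ, card_sdiff_of_subset (hsub Q hQ), card_range]
      have := (hwin Q hQ).2
      have := (hwin Q hQ).1
      omega
    by_cases hA0 : 0 ∈ A <;> by_cases hB0 : 0 ∈ B
    · rwa [if_pos hA0, if_pos hB0] at heq
    · exact absurd heq (by
        intro h
        exact hcontra A B hA hB hA0 hB0 (by rwa [if_pos hA0, if_neg hB0] at h))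
    · exact absurd heq (by
        intro h
        exact hcontra B A hB hA hB0 hA0 (by rw [if_neg hA0, if_pos hB0] at h; exact h.symm))
    · rw [if_neg hA0, if_neg hB0] at heq
      have haux : ∀ P Q : Finset ℕ, P ⊆ range (k+1) →
          range (k+1) \ P = range (k+1) \ Q → P ⊆ Q := by
        intro P Q hP h x hx
        by_contra hxQ
        have hmem : x ∈ range (k+1) \ Q := mem_sdiff.2 ⟨hP hx, hxQ⟩
        rw [← h, mem_sdiff] at hmem
        exact hmem.2 hx
      exact Subset.antisymm (haux A B (hsub A hA) heq) (haux B A (hsub B hB) heq.symm)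


end Stmt11

namespace Stmt11

lemma split_case (m k s : ℕ)
    (ih : ∀ k' s' (F : Finset (Finset ℕ)), 1 ≤ s' → k'+1 ≤ m → (∀ A ∈ F, A ⊆ range m) →
        (∀ A ∈ F, s' ≤ A.card ∧ A.card ≤ k'+1-s') → Valid k' F →
        F.card ≤ ∑ j ∈ Ico (s'-1) (k'+1-s'), (m-1).choose j)
    (F : Finset (Finset ℕ)) (hs : 1 ≤ s) (hkm : k + 1 ≤ m)
    (hwnon : s ≤ k + 1 - s)
    (hsub : ∀ A ∈ F, A ⊆ range (m+1)) (hwin : ∀ A ∈ F, s ≤ A.card ∧ A.card ≤ k+1-s)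
    (hval : Valid k F) (hsh : Shifted F) (hmF : s = 1 → {m} ∉ F) :
    F.card ≤ ∑ j ∈ Ico (s-1) (k+1-s), m.choose j := by
  classical
  have hm1 : 1 ≤ m := by omega
  set F0 := F.filter (fun A => m ∉ A) with hF0
  set F1 := F.filter (fun A => m ∈ A) with hF1
  set G := F1.image (fun A => A.erase m) with hG
  have hGmem : ∀ C : Finset ℕ, C ∈ G ↔ (m ∉ C ∧ insert m C ∈ F) := by
    intro C
    constructor
    · rintro hC
      rw [hG, mem_image] at hC
      obtain ⟨A, hA, rfl⟩ := hC
      rw [hF1, mem_filter] at hA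
      exact ⟨notMem_erase _ _, by rw [insert_erase hA.2]; exact hA.1⟩
    · rintro ⟨h1, h2⟩
      rw [hG, mem_image]
      exact ⟨insert m C, mem_filter.2 ⟨h2, mem_insert_self _ _⟩, by rw [erase_insert h1]⟩
  have hF0mem : ∀ C : Finset ℕ, C ∈ F0 ↔ (C ∈ F ∧ m ∉ C) := by
    intro C; rw [hF0, mem_filter]
  have hGcard : G.card = F1.card := by
    apply card_image_of_injOn
    intro A hA B hB hAB
    rw [mem_coe, hF1, mem_filter] at hA hB
    have hAB' : A.erase m = B.erase m := hAB
    have h2 : insert m (A.erase m) = insert m (B.erase m) := by rw [hAB']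
    rwa [insert_erase hA.2, insert_erase hB.2] at h2
  have hFsplit : F.card = F0.card + G.card := by
    rw [hGcard, hF0, hF1]
    have h := card_filter_add_card_filter_not (s := F) (p := fun A => m ∈ A)
    omega
  have hGsubm : ∀ C ∈ G, C ⊆ range m := by
    intro C hC
    obtain ⟨hmC, hCF⟩ := (hGmem C).1 hC
    intro x hx
    have hx2 := hsub _ hCF (mem_insert_of_mem hx)
    rw [mem_range] at hx2 ⊢
    have hxm : x ≠ m := fun h => hmC (h ▸ hx)
    omega
  have hGcf : ∀ C ∈ G, s - 1 ≤ C.card ∧ C.card + 1 ≤ k + 1 - s := by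
    intro C hC
    obtain ⟨hmC, hCF⟩ := (hGmem C).1 hC
    have hwA := hwin _ hCF
    rw [card_insert_of_notMem hmC] at hwA
    omega
  have pairF0G : ∀ p C : Finset ℕ, p ∈ F → m ∉ p → C ∈ G → Disjoint p C →
      p.card + C.card + 1 ≤ k := by
    intro p C hp hmp hC hd
    obtain ⟨hmC, hCF⟩ := (hGmem C).1 hC
    have hne : p ≠ insert m C := fun h => hmp (h ▸ mem_insert_self m C)
    have hd2 : Disjoint p (insert m C) := by
      rw [disjoint_insert_right]
      exact ⟨hmp, hd⟩
    have := hval p hp _ hCF hne hd2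
    rw [card_insert_of_notMem hmC] at this
    omega
  have pairGG : ∀ C D : Finset ℕ, C ∈ G → D ∈ G → Disjoint C D → C ∪ D ≠ range m →
      C.card + D.card + 2 ≤ k := by
    intro C D hC hD hd hne
    obtain ⟨hmC, hCF⟩ := (hGmem C).1 hC
    obtain ⟨hmD, hDF⟩ := (hGmem D).1 hD
    have hsubU : C ∪ D ⊆ range m := union_subset (hGsubm C hC) (hGsubm D hD)
    obtain ⟨x, hxr, hxCD⟩ := exists_of_ssubset (hsubU.ssubset_of_ne hne)
    have hxm : x < m := mem_range.1 hxr
    have hxD : x ∉ D := fun h => hxCD (mem_union_right _ h)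
    have hxC : x ∉ C := fun h => hxCD (mem_union_left _ h)
    have hxiD : insert x D ∈ F := by
      have h1 : x ∉ insert m D := by
        rw [mem_insert]; push_neg; exact ⟨by omega, hxD⟩
      have h2 := hsh _ hDF x m hxm (mem_insert_self _ _) h1
      rwa [erase_insert hmD] at h2
    have hne2 : insert x D ≠ insert m C := by
      intro h
      have h3 : m ∈ insert x D := h ▸ mem_insert_self m C
      rw [mem_insert] at h3
      rcases h3 with h' | h'
      · omega
      · exact hmD h'
    have hd2 : Disjoint (insert x D) (insert m C) := by
      rw [disjoint_left]
      intro y hy1 hy2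
      rw [mem_insert] at hy1 hy2
      rcases hy1 with rfl | hy1
      · rcases hy2 with h' | h'
        · omega
        · exact hxC h'
      · rcases hy2 with rfl | h'
        · exact hmD hy1
        · exact (disjoint_left.1 hd h') hy1
    have := hval _ hxiD _ hCF hne2 hd2
    rw [card_insert_of_notMem hxD, card_insert_of_notMem hmC] at this
    omega
  -- the partition
  set Gbig := G.filter (fun C => s ≤ C.card) with hGbig
  set Gsm := G.filter (fun C => ¬ s ≤ C.card) with hGsm
  set X2 := Gbig.filter (fun C => C ∉ F0) with hX2
  set X3 := Gbig.filter (fun C => C ∈ F0) with hX3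
  set Bb := X2.filter (fun C => 0 ∉ C ∧ (range m \ C) ∈ G) with hBb
  set U' := F0 ∪ (X2 \ Bb) with hU'
  set J := X3 ∪ Bb ∪ Gsm with hJ
  have hX2full : ∀ C ∈ X2, C ∈ G ∧ s ≤ C.card ∧ C ∉ F0 := by
    intro C hC
    rw [hX2, mem_filter, hGbig, mem_filter] at hC
    exact ⟨hC.1.1, hC.1.2, hC.2⟩
  have hX3full : ∀ C ∈ X3, C ∈ G ∧ s ≤ C.card ∧ C ∈ F0 := by
    intro C hC
    rw [hX3, mem_filter, hGbig, mem_filter] at hC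
    exact ⟨hC.1.1, hC.1.2, hC.2⟩
  have hBbsub : Bb ⊆ X2 := by rw [hBb]; exact filter_subset _ _
  have hBbfull : ∀ C ∈ Bb, 0 ∉ C ∧ (range m \ C) ∈ G := by
    intro C hC
    rw [hBb, mem_filter] at hC
    exact hC.2
  have hJG : ∀ C ∈ J, C ∈ G := by
    intro C hC
    rw [hJ, mem_union, mem_union] at hC
    rcases hC with (h | h) | h
    · exact (hX3full C h).1
    · exact (hX2full C (hBbsub h)).1
    · rw [hGsm, mem_filter] at h; exact h.1
  -- cardinalities
  have c1 : G.card = Gbig.card + Gsm.card := by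
    rw [hGbig, hGsm]
    have h := card_filter_add_card_filter_not (s := G) (p := fun C => s ≤ C.card)
    omega
  have c2 : Gbig.card = X3.card + X2.card := by
    rw [hX3, hX2]
    have h := card_filter_add_card_filter_not (s := Gbig) (p := fun C => C ∈ F0)
    omega
  have c3 : (X2 \ Bb).card + Bb.card = X2.card := card_sdiff_add_card_eq_card hBbsub
  have c4 : U'.card = F0.card + (X2 \ Bb).card := by
    rw [hU']
    apply card_union_of_disjoint
    rw [disjoint_left]
    intro a ha ha2
    exact (hX2full a (mem_sdiff.1 ha2).1).2.2 ha
  have c5 : J.card = X3.card + Bb.card + Gsm.card := by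
    rw [hJ]
    rw [card_union_of_disjoint, card_union_of_disjoint]
    · rw [disjoint_left]
      intro a ha ha2
      exact (hX2full a (hBbsub ha2)).2.2 ((hX3full a ha).2.2)
    · rw [disjoint_left]
      intro a ha ha2
      rw [hGsm, mem_filter] at ha2
      rw [mem_union] at ha
      rcases ha with h | h
      · exact ha2.2 (hX3full a h).2.1
      · exact ha2.2 (hX2full a (hBbsub h)).2.1
  have hFUJ : F.card = U'.card + J.card := by omega
  -- U' induction hypotheses
  have hUsub : ∀ A ∈ U', A ⊆ range m := by
    intro A hA
    rw [hU', mem_union] at hA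
    rcases hA with h | h
    · rw [hF0mem] at h
      intro x hx
      have hx2 := hsub _ h.1 hx
      rw [mem_range] at hx2 ⊢
      have : x ≠ m := fun he => h.2 (he ▸ hx)
      omega
    · exact hGsubm _ (hX2full _ (mem_sdiff.1 h).1).1
  have hUwin : ∀ A ∈ U', s ≤ A.card ∧ A.card ≤ k+1-s := by
    intro A hA
    rw [hU', mem_union] at hA
    rcases hA with h | h
    · exact hwin _ ((hF0mem A).1 h).1
    · have h2 := hX2full _ (mem_sdiff.1 h).1
      have h3 := hGcf _ h2.1
      exact ⟨h2.2.1, by omega⟩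
  have hUval : Valid k U' := by
    have hmix : ∀ p q : Finset ℕ, p ∈ F0 → q ∈ X2 \ Bb → Disjoint p q →
        p.card + q.card ≤ k := by
      intro p q hp0 hq2 hd
      rw [hF0mem] at hp0
      have hqG := (hX2full _ (mem_sdiff.1 hq2).1).1
      have := pairF0G p q hp0.1 hp0.2 hqG hd
      omega
    intro p hp q hq hpq hd
    rw [hU', mem_union] at hp hq
    rcases hp with hp0 | hp2 <;> rcases hq with hq0 | hq2
    · exact hval p ((hF0mem p).1 hp0).1 q ((hF0mem q).1 hq0).1 hpq hd
    · exact hmix p q hp0 hq2 hd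
    · have := hmix q p hq0 hp2 hd.symm; omega
    · -- both in X2 \ Bb
      have hpf := hX2full _ (mem_sdiff.1 hp2).1
      have hqf := hX2full _ (mem_sdiff.1 hq2).1
      by_cases hcover : p ∪ q = range m
      · exfalso
        have key0 : ∀ a b : Finset ℕ, a ∈ X2 \ Bb → b ∈ X2 → Disjoint a b →
            a ∪ b = range m → 0 ∉ a → False := by
          intro a b ha hb hdab hc h0
          have haX2 := (mem_sdiff.1 ha).1
          apply (mem_sdiff.1 ha).2
          rw [hBb, mem_filter]
          refine ⟨haX2, h0, ?_⟩
          have hrm : range m \ a = b := by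
            ext y
            rw [mem_sdiff]
            constructor
            · rintro ⟨hy1, hy2⟩
              rw [← hc, mem_union] at hy1
              tauto
            · intro hy
              refine ⟨by rw [← hc]; exact mem_union_right _ hy,
                fun hya => (disjoint_left.1 hdab hya) hy⟩
          rw [hrm]
          exact (hX2full b hb).1
        by_cases h0p : 0 ∈ p
        · have h0q : 0 ∉ q := disjoint_left.1 hd h0p
          exact key0 q p hq2 (mem_sdiff.1 hp2).1 hd.symm (by rw [union_comm]; exact hcover) h0q
        · exact key0 p q hp2 (mem_sdiff.1 hq2).1 hd hcover h0p
      · have := pairGG p q hpf.1 hqf.1 hd hcover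
        omega
  have ihU := ih k s U' hs (by omega) hUsub hUwin hUval
  -- J validity
  have hJsub : ∀ C ∈ J, C ⊆ range m := fun C hC => hGsubm C (hJG C hC)
  have hJval2 : ∀ p ∈ J, ∀ q ∈ J, p ≠ q → Disjoint p q → p.card + q.card + 2 ≤ k := by
    intro p hp q hq hpq hd
    have hpG := hJG p hp
    have hqG := hJG q hq
    by_cases hcover : p ∪ q = range m
    · exfalso
      have hcards : p.card + q.card = m := by
        rw [← card_range m, ← hcover, card_union_of_disjoint hd]
      have hX3imp : ∀ a b : Finset ℕ, a ∈ X3 → b ∈ G → Disjoint a b →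
          a.card + b.card = m → False := by
        intro a b ha hb hdab hc
        have h3 := (hX3full a ha).2.2
        rw [hF0mem] at h3
        have := pairF0G a b h3.1 h3.2 hb hdab
        omega
      have hsmimp : ∀ a b : Finset ℕ, a ∈ Gsm → b ∈ G → a.card + b.card = m → False := by
        intro a b ha hb hc
        rw [hGsm, mem_filter] at ha
        have hbc := (hGcf b hb).2
        have hac := ha.2
        omega
      rw [hJ, mem_union, mem_union] at hp hq
      rcases hp with (hp3 | hpB) | hpS
      · exact hX3imp p q hp3 hqG hd hcards
      · rcases hq with (hq3 | hqB) | hqS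
        · exact hX3imp q p hq3 hpG hd.symm (by omega)
        · -- both Bb : neither contains 0
          have h0m : (0:ℕ) ∈ range m := mem_range.2 (by omega)
          rw [← hcover, mem_union] at h0m
          rcases h0m with h | h
          · exact (hBbfull p hpB).1 h
          · exact (hBbfull q hqB).1 h
        · exact hsmimp q p hqS hpG (by omega)
      · exact hsmimp p q hpS hqG hcards
    · exact pairGG p q hpG hqG hd hcover
  -- now branch on s
  rcases eq_or_lt_of_le hs with hs1 | hs2
  · -- s = 1
    have hseq : s = 1 := hs1.symm
    subst hseq
    have hGlow : ∀ C ∈ G, 1 ≤ C.card := by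
      intro C hC
      obtain ⟨hmC, hCF⟩ := (hGmem C).1 hC
      by_contra hc
      have : C = ∅ := card_eq_zero.1 (by omega)
      subst this
      exact (hmF rfl) (by simpa using hCF)
    have hJwin : ∀ C ∈ J, 1 ≤ C.card ∧ C.card ≤ (k-1)+1-1 := by
      intro C hC
      have h1 := hGlow C (hJG C hC)
      have h2 := (hGcf C (hJG C hC)).2
      omega
    have hJval : Valid (k-1) J := by
      intro p hp q hq hpq hd
      have := hJval2 p hp q hq hpq hd
      omega
    have ihJ := ih (k-1) 1 J (le_refl 1) (by omega) hJsub hJwin hJval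
    -- ledger
    have hk1 : 1 ≤ k := by omega
    have hled : ∑ j ∈ Ico (1-1) (k+1-1), m.choose j
        = ∑ j ∈ Ico (1-1) (k+1-1), (m-1).choose j + ∑ j ∈ Ico (1-1) ((k-1)+1-1), (m-1).choose j := by
      have e1 : (1:ℕ) - 1 = 0 := rfl
      have e2 : k + 1 - 1 = k := by omega
      have e3 : (k-1) + 1 - 1 = k - 1 := by omega
      rw [e1, e2, e3]
      have e4 : Ico 0 k = range k := by rw [range_eq_Ico]
      have e5 : Ico 0 (k-1) = range (k-1) := by rw [range_eq_Ico]
      rw [e4, e5]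
      have e6 : k = (k-1) + 1 := by omega
      rw [e6]
      have e7 : m = (m-1) + 1 := by omega
      rw [e7]
      have e8 : (m-1) + 1 - 1 = m - 1 := by omega
      rw [e8]
      have e9 : k - 1 + 1 - 1 = k - 1 := by omega
      rw [e9]
      exact sum_range_choose_step (m-1) (k-1)
    omega
  · -- 2 ≤ s
    have hs2' : 2 ≤ s := hs2
    have hJwin : ∀ C ∈ J, s-1 ≤ C.card ∧ C.card ≤ (k-2)+1-(s-1) := by
      intro C hC
      have h1 := hGcf C (hJG C hC)
      constructor
      · exact h1.1
      · omega
    have hJval : Valid (k-2) J := by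
      intro p hp q hq hpq hd
      have := hJval2 p hp q hq hpq hd
      omega
    have ihJ := ih (k-2) (s-1) J (by omega) (by omega) hJsub hJwin hJval
    have hled : ∑ j ∈ Ico (s-1) (k+1-s), m.choose j
        = ∑ j ∈ Ico (s-1) (k+1-s), (m-1).choose j
          + ∑ j ∈ Ico ((s-1)-1) ((k-2)+1-(s-1)), (m-1).choose j := by
      have e7 : m = (m-1) + 1 := by omega
      rw [e7]
      have e8 : (m-1) + 1 - 1 = m - 1 := by omega
      rw [e8]
      have := sum_Ico_choose_step (m-1) (s-1) (k+1-s) (by omega)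
      rw [this]
      have e10 : (k+1-s) - 1 = (k-2)+1-(s-1) := by omega
      rw [e10]
    omega


lemma key (n : ℕ)
    (ih : ∀ m, m < n → ∀ k' s' : ℕ, ∀ F : Finset (Finset ℕ), 1 ≤ s' → k'+1 ≤ m →
        (∀ A ∈ F, A ⊆ range m) → (∀ A ∈ F, s' ≤ A.card ∧ A.card ≤ k'+1-s') → Valid k' F →
        F.card ≤ ∑ j ∈ Ico (s'-1) (k'+1-s'), (m-1).choose j)
    (k s : ℕ) (F : Finset (Finset ℕ)) (hs : 1 ≤ s) (hkn : k+1 ≤ n)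
    (hsub : ∀ A ∈ F, A ⊆ range n) (hwin : ∀ A ∈ F, s ≤ A.card ∧ A.card ≤ k+1-s)
    (hval : Valid k F) (hsh : Shifted F) (hns : s = 1 → n = k+1 ∨ {n-1} ∉ F) :
    F.card ≤ ∑ j ∈ Ico (s-1) (k+1-s), (n-1).choose j := by
  by_cases hw : s ≤ k+1-s
  · rcases eq_or_lt_of_le hkn with hbase | hlt
    · subst hbase
      have e : k + 1 - 1 = k := by omega
      rw [e]
      exact base_case k s F hs hsub hwin hval
    · obtain ⟨m, rfl⟩ : ∃ m, n = m+1 := ⟨n-1, by omega⟩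
      have e : m + 1 - 1 = m := by omega
      rw [e]
      have ih' := ih m (by omega)
      have e2 : ∀ k' s' : ℕ, ∀ F : Finset (Finset ℕ), 1 ≤ s' → k'+1 ≤ m →
          (∀ A ∈ F, A ⊆ range m) → (∀ A ∈ F, s' ≤ A.card ∧ A.card ≤ k'+1-s') → Valid k' F →
          F.card ≤ ∑ j ∈ Ico (s'-1) (k'+1-s'), (m-1).choose j := ih'
      apply split_case m k s e2 F hs (by omega) hw hsub hwin hval hsh
      intro hs1
      rcases hns hs1 with h | h
      · omega
      · rwa [e] at h
  · have hF : F = ∅ := by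
      rw [eq_empty_iff_forall_notMem]
      intro A hA
      have := hwin A hA
      omega
    rw [hF]
    simp

theorem main : ∀ n k s : ℕ, ∀ F : Finset (Finset ℕ), 1 ≤ s → k+1 ≤ n →
    (∀ A ∈ F, A ⊆ range n) → (∀ A ∈ F, s ≤ A.card ∧ A.card ≤ k+1-s) → Valid k F →
    F.card ≤ ∑ j ∈ Ico (s-1) (k+1-s), (n-1).choose j := by
  intro n
  induction n using Nat.strong_induction_on with
  | _ n ih =>
  intro k s F hs hkn hsub hwin hval
  obtain ⟨H, hHc, hHsub, hHwin, hHval, hHsh⟩ :=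
    exists_shifted (fmeas F) F le_rfl hsub hwin hval
  rw [← hHc]
  by_cases hcase : s = 1 ∧ {n-1} ∈ H ∧ k+2 ≤ n
  · -- singleton route
    obtain ⟨hs1, hmH, hn2⟩ := hcase
    subst hs1
    have hsing : ∀ x ∈ range n, ({x} : Finset ℕ) ∈ H := by
      intro x hx
      rw [mem_range] at hx
      rcases eq_or_ne x (n-1) with h | h
      · subst h; exact hmH
      · have hxlt : x < n - 1 := by omega
        have h2 := hHsh {n-1} hmH x (n-1) hxlt (mem_singleton_self _)
          (by rw [mem_singleton]; omega)
        rwa [erase_singleton, LawfulSingleton.insert_empty_eq] at h2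
    have hcap : ∀ A ∈ H, A.card + 1 ≤ k := by
      intro A hA
      have hAsub := hHsub A hA
      have hAcard := (hHwin A hA).2
      have hnsub : ¬ range n ⊆ A := by
        intro hc
        have := card_le_card hc
        rw [card_range] at this
        omega
      obtain ⟨x, hx, hxA⟩ := not_subset.1 hnsub
      have hxH := hsing x hx
      have hne : A ≠ {x} := by
        intro h
        rw [h] at hxA
        exact hxA (mem_singleton_self x)
      have hd : Disjoint A {x} := by
        rw [disjoint_singleton_right]; exact hxA
      have := hHval A hA {x} hxH hne hd
      rw [card_singleton] at this
      omega
    have hk2 : 2 ≤ k := by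
      have := hcap {n-1} hmH
      rw [card_singleton] at this
      omega
    set Frest := H.filter (fun A => 2 ≤ A.card) with hFrest
    set Sgl := H.filter (fun A => ¬ 2 ≤ A.card) with hSgld
    have hcardH : H.card = Frest.card + Sgl.card := by
      rw [hFrest, hSgld]
      have h := card_filter_add_card_filter_not (s := H) (p := fun A => 2 ≤ A.card)
      omega
    have hSgleq : Sgl = (range n).image (fun x => ({x} : Finset ℕ)) := by
      ext A
      constructor
      · intro hA
        rw [hSgld, mem_filter] at hA
        have h1 := (hHwin A hA.1).1
        have hc1 : A.card = 1 := by omega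
        obtain ⟨x, rfl⟩ := card_eq_one.1 hc1
        rw [mem_image]
        exact ⟨x, hHsub _ hA.1 (mem_singleton_self x), rfl⟩
      · rw [mem_image]
        rintro ⟨x, hx, rfl⟩
        rw [hSgld, mem_filter]
        exact ⟨hsing x hx, by rw [card_singleton]; omega⟩
    have hSglcard : Sgl.card = n := by
      rw [hSgleq, card_image_of_injective _ Finset.singleton_injective, card_range]
    have hFrkey : Frest.card ≤ ∑ j ∈ Ico (2-1) (k+1-2), (n-1).choose j := by
      apply key n ih k 2 Frest (by omega) hkn
      · intro A hA
        exact hHsub A (mem_of_mem_filter A hA)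
      · intro A hA
        rw [hFrest, mem_filter] at hA
        have := hcap A hA.1
        exact ⟨hA.2, by omega⟩
      · intro p hp q hq hpq hd
        exact hHval p (mem_of_mem_filter p hp) q (mem_of_mem_filter q hq) hpq hd
      · intro A hA i j hij hjA hiA
        rw [hFrest, mem_filter] at hA ⊢
        refine ⟨hHsh A hA.1 i j hij hjA hiA, ?_⟩
        rw [card_insert_erase hiA hjA]
        exact hA.2
      · intro h; omega
    -- arithmetic
    have hd1 : ∑ j ∈ Ico 0 1, (n-1).choose j + ∑ j ∈ Ico 1 k, (n-1).choose j
        = ∑ j ∈ Ico 0 k, (n-1).choose j := sum_Ico_consecutive _ (by omega) (by omega)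
    have hd0 : ∑ j ∈ Ico 0 1, (n-1).choose j = 1 := by simp
    have hd2 : ∑ j ∈ Ico 1 k, (n-1).choose j
        = ∑ j ∈ Ico 1 (k-1), (n-1).choose j + (n-1).choose (k-1) := by
      have e : k = (k-1) + 1 := by omega
      rw [e, sum_Ico_succ_top (by omega)]
      have e2 : k - 1 + 1 - 1 = k - 1 := by omega
      rw [e2]
    have hch : n - 1 ≤ (n-1).choose (k-1) := self_le_choose (n-1) (k-1) (by omega) (by omega)
    have egoal : (1:ℕ) - 1 = 0 := rfl
    have egoal2 : k + 1 - 1 = k := by omega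
    rw [egoal, egoal2]
    have e21 : (2:ℕ) - 1 = 1 := rfl
    have e22 : k + 1 - 2 = k - 1 := by omega
    rw [e21, e22] at hFrkey
    omega
  · -- direct key route
    apply key n ih k s H hs hkn hHsub hHwin hHval hHsh
    intro hs1
    by_cases hmem : ({n-1} : Finset ℕ) ∈ H
    · left
      subst hs1
      have : ¬ (k + 2 ≤ n) := by
        intro hc
        exact hcase ⟨rfl, hmem, hc⟩
      omega
    · right
      exact hmem

end Stmt11

theorem stmt_11 (n k : ℕ) (hk1 : 1 ≤ k) (hk2 : k ≤ n - 1)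
    (F : Finset (Finset (Fin n)))
    (hne : ∀ A ∈ F, A.Nonempty) (hcard : ∀ A ∈ F, A.card ≤ k)
    (hdisj : ∀ A ∈ F, ∀ B ∈ F, Disjoint A B → A.card + B.card ≤ k) :
    F.card ≤ ∑ i ∈ Finset.range k, (n - 1).choose i := by
  classical
  have hn : k + 1 ≤ n := by omega
  set f : Finset (Fin n) → Finset ℕ := fun A => A.image (fun x : Fin n => (x : ℕ)) with hf
  have hfinj : Function.Injective f :=
    Finset.image_injective Fin.val_injective
  set F' : Finset (Finset ℕ) := F.image f with hF'
  have hcardF : F'.card = F.card := Finset.card_image_of_injective F hfinj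
  have hfcard : ∀ A : Finset (Fin n), (f A).card = A.card := fun A =>
    Finset.card_image_of_injective A Fin.val_injective
  have hmain := Stmt11.main n k 1 F' (le_refl 1) hn ?_ ?_ ?_
  · rw [← hcardF]
    have e1 : (1:ℕ) - 1 = 0 := rfl
    have e2 : k + 1 - 1 = k := by omega
    rw [e1, e2] at hmain
    rwa [show Finset.Ico 0 k = Finset.range k by rw [Finset.range_eq_Ico]] at hmain
  · intro A hA
    rw [hF', Finset.mem_image] at hA
    obtain ⟨B, hB, rfl⟩ := hA
    intro x hx
    rw [hf] at hx
    simp only [Finset.mem_image] at hx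
    obtain ⟨y, _, rfl⟩ := hx
    exact Finset.mem_range.2 y.isLt
  · intro A hA
    rw [hF', Finset.mem_image] at hA
    obtain ⟨B, hB, rfl⟩ := hA
    rw [hfcard]
    constructor
    · exact Finset.card_pos.2 (hne B hB)
    · have := hcard B hB
      omega
  · intro p hp q hq hpq hd
    rw [hF', Finset.mem_image] at hp hq
    obtain ⟨A, hA, rfl⟩ := hp
    obtain ⟨B, hB, rfl⟩ := hq
    have hAB : Disjoint A B := by
      rw [Finset.disjoint_left]
      intro a haA haB
      have h1 : (a : ℕ) ∈ f A := Finset.mem_image_of_mem _ haA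
      have h2 : (a : ℕ) ∈ f B := Finset.mem_image_of_mem _ haB
      exact (Finset.disjoint_left.1 hd h1) h2
    rw [hfcard, hfcard]
    exact hdisj A hA B hB hAB
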